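/- Let (ρ^AI, ρ^H) be a pair of stochastic choice functions satisfying: (Positivity) ρ(x,S) > 0 for all x ∈ S and ρ ∈ {ρ^AI, ρ^H}; (H-IIA) ρ^H satisfies IIA; (Proportionality) Δ_{xy}(S,T|ρ^AI)·Φ_{zt}(S',T'|ρ^AI,ρ^H) = Δ_{zt}(S',T'|ρ^AI)·Φ_{xy}(S,T|ρ^AI,ρ^H) for all tuples (x,y,S,T) and (z,t,S',T') with x,y ∈ S∩T and z,t ∈ S'∩T'; (Bounded Instability) Δ_{xy}(S,T|ρ^AI)·Φ_{xy}(S,T|ρ^AI,ρ^H) ≥ 0 and |Δ_{xy}(S,T|ρ^AI)| ≤ |Φ_{xy}(S,T|ρ^AI,ρ^H)| for all such tuples, both strictly if Δ_{xy}(S,T|ρ^AI) ≠ 0; (Bounded Divergence) ρ^AI(z,U)·|Φ_{xy}(S,T|ρ^AI,ρ^H)| ≥ ρ^H(z,U)·|Δ_{xy}(S,T|ρ^AI)| for all such tuples, all nonempty U ⊆ X and z ∈ U, strictly if Δ_{xy}(S,T|ρ^AI) ≠ 0. Then there exist u, v : X → ℝ_{>0} and α ∈ [0,1] such that (ρ^AI,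 ρ^H) is consistent with the Luce Alignment Model with parameters (u, v, α). -/

import Mathlib

open Finset

/-- A stochastic choice function: values in `[0,1]`, positive only on the menu,
and summing to one over each nonempty menu. -/
def IsSCF {X : Type*} (ρ : X → Finset X → ℝ) : Prop :=
  ∀ S : Finset X, S.Nonempty →
    (∀ x, 0 ≤ ρ x S ∧ ρ x S ≤ 1) ∧ (∀ x, 0 < ρ x S → x ∈ S) ∧ (∑ x ∈ S, ρ x S) = 1

/-- Independence of Irrelevant Alternatives. -/
def IIA {X : Type*} [DecidableEq X] (ρ : X → Finset X → ℝ) : Prop :=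
  ∀ S T : Finset X, S.Nonempty → T.Nonempty →
    ∀ x ∈ S ∩ T, ∀ y ∈ S ∩ T, ρ x S * ρ y T = ρ x T * ρ y S

/-- Own instability `Δ_{xy}(S,T|ρ)`. -/
noncomputable def Delta {X : Type*} (ρ : X → Finset X → ℝ) (x y : X) (S T : Finset X) : ℝ :=
  ρ x S * ρ y T - ρ y S * ρ x T

/-- Cross instability `Γ_{xy}(S,T|ρ,ρ')`. -/
noncomputable def Gamma {X : Type*} (ρ ρ' : X → Finset X → ℝ) (x y : X) (S T : Finset X) : ℝ :=
  ρ x S * ρ' y T - ρ y S * ρ' x T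

/-- Composite instability `Φ_{xy}(S,T|ρ,ρ')`. -/
noncomputable def Phi {X : Type*} (ρ ρ' : X → Finset X → ℝ) (x y : X) (S T : Finset X) : ℝ :=
  Gamma ρ ρ' x y S T + Gamma ρ' ρ x y S T

/-- The Luce rule with utility `u`. -/
noncomputable def LuceRule {X : Type*} (u : X → ℝ) (x : X) (S : Finset X) : ℝ :=
  u x / ∑ y ∈ S, u y

/-- `ρAI` is consistent with the Luce Alignment Model with parameters `(u, v, α)`. -/
def LAM1 {X : Type*} (ρAI : X → Finset X → ℝ) (u v : X → ℝ) (α : ℝ) : Prop :=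
  (∀ x, 0 < u x) ∧ (∀ x, 0 < v x) ∧ 0 ≤ α ∧ α ≤ 1 ∧
    ∀ S : Finset X, S.Nonempty → ∀ x ∈ S,
      ρAI x S = α * (u x / ∑ y ∈ S, u y) + (1 - α) * (v x / ∑ y ∈ S, v y)

/-- The pair `(ρAI, ρH)` is consistent with the Luce Alignment Model
with parameters `(u, v, α)`. -/
def LAMpair {X : Type*} (ρAI ρH : X → Finset X → ℝ) (u v : X → ℝ) (α : ℝ) : Prop :=
  LAM1 ρAI u v α ∧
    ∀ S : Finset X, S.Nonempty → ∀ x ∈ S, ρH x S = u x / ∑ y ∈ S, u y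


lemma luce_extract {X : Type*} [Fintype X] [DecidableEq X] [Nonempty X]
    (τ : X → Finset X → ℝ)
    (hpos : ∀ S : Finset X, S.Nonempty → ∀ x ∈ S, 0 < τ x S)
    (hsum : ∀ S : Finset X, S.Nonempty → ∑ x ∈ S, τ x S = 1)
    (hiia : ∀ (x y : X) (S T : Finset X), x ∈ S → x ∈ T → y ∈ S → y ∈ T →
      τ x S * τ y T = τ y S * τ x T) :
    ∀ S : Finset X, S.Nonempty → ∀ x ∈ S, τ x S = τ x univ / ∑ y ∈ S, τ y univ := by
  intro S hS x hx
  have hsp : 0 < ∑ y ∈ S, τ y univ :=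
    Finset.sum_pos (fun y _ => hpos univ univ_nonempty y (mem_univ y)) hS
  have key : τ x S * ∑ y ∈ S, τ y univ = τ x univ := by
    rw [Finset.mul_sum]
    have h1 : ∀ y ∈ S, τ x S * τ y univ = τ x univ * τ y S := by
      intro y hy
      have := hiia x y S univ hx (mem_univ x) hy (mem_univ y)
      linarith [this]
    rw [Finset.sum_congr rfl h1, ← Finset.mul_sum, hsum S hS, mul_one]
  rw [eq_div_iff hsp.ne']
  exact key

theorem lam_characterization {X : Type*} [Fintype X] [DecidableEq X]
    (hcard : 3 ≤ Fintype.card X)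
    (ρAI ρH : X → Finset X → ℝ) (hAI : IsSCF ρAI) (hH : IsSCF ρH)
    (hpos : ∀ S : Finset X, S.Nonempty → ∀ x ∈ S, 0 < ρAI x S ∧ 0 < ρH x S)
    (hIIA : IIA ρH)
    (hprop : ∀ (x y z t : X) (S T S' T' : Finset X),
      x ∈ S ∩ T → y ∈ S ∩ T → z ∈ S' ∩ T' → t ∈ S' ∩ T' →
        Delta ρAI x y S T * Phi ρAI ρH z t S' T'
          = Delta ρAI z t S' T' * Phi ρAI ρH x y S T)
    (hbi : ∀ (x y : X) (S T : Finset X), x ∈ S ∩ T → y ∈ S ∩ T →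
      0 ≤ Delta ρAI x y S T * Phi ρAI ρH x y S T ∧
      |Delta ρAI x y S T| ≤ |Phi ρAI ρH x y S T| ∧
      (Delta ρAI x y S T ≠ 0 →
        0 < Delta ρAI x y S T * Phi ρAI ρH x y S T ∧
        |Delta ρAI x y S T| < |Phi ρAI ρH x y S T|))
    (hbd : ∀ (x y : X) (S T : Finset X), x ∈ S ∩ T → y ∈ S ∩ T →
      ∀ U : Finset X, U.Nonempty → ∀ z ∈ U,
        ρH z U * |Delta ρAI x y S T| ≤ ρAI z U * |Phi ρAI ρH x y S T| ∧
        (Delta ρAI x y S T ≠ 0 →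
          ρH z U * |Delta ρAI x y S T| < ρAI z U * |Phi ρAI ρH x y S T|)) :
    ∃ (u v : X → ℝ) (α : ℝ), LAMpair ρAI ρH u v α := by
  have hNE : Nonempty X := Fintype.card_pos_iff.mp (by omega)
  have hAIsum : ∀ S : Finset X, S.Nonempty → ∑ x ∈ S, ρAI x S = 1 :=
    fun S hS => (hAI S hS).2.2
  have hHsum : ∀ S : Finset X, S.Nonempty → ∑ x ∈ S, ρH x S = 1 :=
    fun S hS => (hH S hS).2.2
  have hHiia : ∀ (x y : X) (S T : Finset X), x ∈ S → x ∈ T → y ∈ S → y ∈ T →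
      ρH x S * ρH y T = ρH y S * ρH x T := by
    intro x y S T hxS hxT hyS hyT
    have := hIIA S T ⟨x, hxS⟩ ⟨x, hxT⟩ x (mem_inter.mpr ⟨hxS, hxT⟩)
      y (mem_inter.mpr ⟨hyS, hyT⟩)
    linarith [this]
  have hHluce := luce_extract ρH (fun S hS x hx => (hpos S hS x hx).2) hHsum hHiia
  have hHposu : ∀ x : X, 0 < ρH x univ :=
    fun x => (hpos univ univ_nonempty x (mem_univ x)).2
  by_cases hdeg : ∀ (x y : X) (S T : Finset X), x ∈ S ∩ T → y ∈ S ∩ T →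
      Delta ρAI x y S T = 0
  · -- degenerate case: ρAI satisfies IIA, take α = 0
    have hAiia : ∀ (x y : X) (S T : Finset X), x ∈ S → x ∈ T → y ∈ S → y ∈ T →
        ρAI x S * ρAI y T = ρAI y S * ρAI x T := by
      intro x y S T hxS hxT hyS hyT
      have := hdeg x y S T (mem_inter.mpr ⟨hxS, hxT⟩) (mem_inter.mpr ⟨hyS, hyT⟩)
      simp only [Delta] at this
      linarith [this]
    have hAluce := luce_extract ρAI (fun S hS x hx => (hpos S hS x hx).1) hAIsum hAiia
    refine ⟨fun x => ρH x univ, fun x => ρAI x univ, 0,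
      ⟨⟨hHposu, fun x => (hpos univ univ_nonempty x (mem_univ x)).1,
        le_refl 0, zero_le_one, ?_⟩, hHluce⟩⟩
    intro S hS x hx
    rw [hAluce S hS x hx]; ring
  · push_neg at hdeg
    obtain ⟨x0, y0, S0, T0, hx0, hy0, hΔ0⟩ := hdeg
    set Δ0 := Delta ρAI x0 y0 S0 T0 with hΔ0def
    set Φ0 := Phi ρAI ρH x0 y0 S0 T0 with hΦ0def
    obtain ⟨-, -, hstr⟩ := hbi x0 y0 S0 T0 hx0 hy0
    obtain ⟨hΔΦ, hlt⟩ := hstr hΔ0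
    rw [← hΔ0def, ← hΦ0def] at hΔΦ hlt
    have hΦ0 : Φ0 ≠ 0 := by
      intro h; rw [h, mul_zero] at hΔΦ; exact lt_irrefl 0 hΔΦ
    set l := Δ0 / Φ0 with hl
    have hlpos : 0 < l := div_pos_iff.mpr (mul_pos_iff.mp hΔΦ)
    have hllt1 : l < 1 := by
      have habs : |l| < 1 := by
        rw [hl, abs_div]
        exact (div_lt_one (abs_pos.mpr hΦ0)).mpr hlt
      calc l ≤ |l| := le_abs_self l
        _ < 1 := habs
    have h1l : 0 < 1 - l := by linarith
    have hlam : ∀ (x y : X) (S T : Finset X), x ∈ S ∩ T → y ∈ S ∩ T →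
        Delta ρAI x y S T = l * Phi ρAI ρH x y S T := by
      intro x y S T hx hy
      have h := hprop x y x0 y0 S T S0 T0 hx hy hx0 hy0
      rw [hl, div_mul_eq_mul_div, eq_comm, div_eq_iff hΦ0]
      linarith [h]
    have hdom : ∀ U : Finset X, U.Nonempty → ∀ z ∈ U, l * ρH z U < ρAI z U := by
      intro U hU z hz
      obtain ⟨-, hs⟩ := hbd x0 y0 S0 T0 hx0 hy0 U hU z hz
      have h2 := hs hΔ0
      have hΔabs : |Δ0| = l * |Φ0| := by
        have : |l| = |Δ0| / |Φ0| := by rw [hl, abs_div]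
        rw [abs_of_pos hlpos] at this
        rw [this, div_mul_cancel₀ _ (abs_ne_zero.mpr hΦ0)]
      rw [← hΔ0def, ← hΦ0def, hΔabs] at h2
      have hΦabs : 0 < |Φ0| := abs_pos.mpr hΦ0
      nlinarith [h2, hΦabs]
    set τ : X → Finset X → ℝ := fun z U => (ρAI z U - l * ρH z U) / (1 - l) with hτ
    have hτpos : ∀ S : Finset X, S.Nonempty → ∀ x ∈ S, 0 < τ x S := by
      intro S hS x hx
      exact div_pos (by linarith [hdom S hS x hx]) h1l
    have hτsum : ∀ S : Finset X, S.Nonempty → ∑ x ∈ S, τ x S = 1 := by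
      intro S hS
      rw [hτ]
      simp only
      rw [← Finset.sum_div, Finset.sum_sub_distrib, ← Finset.mul_sum, hAIsum S hS, hHsum S hS,
        mul_one, div_self h1l.ne']
    have hτiia : ∀ (x y : X) (S T : Finset X), x ∈ S → x ∈ T → y ∈ S → y ∈ T →
        τ x S * τ y T = τ y S * τ x T := by
      intro x y S T hxS hxT hyS hyT
      have hD := hlam x y S T (mem_inter.mpr ⟨hxS, hxT⟩) (mem_inter.mpr ⟨hyS, hyT⟩)
      have hHe := hHiia x y S T hxS hxT hyS hyT
      simp only [Delta, Phi, Gamma] at hD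
      rw [hτ]
      simp only
      rw [div_mul_div_comm, div_mul_div_comm]
      congr 1
      linear_combination hD + l ^ 2 * hHe
    have hτluce := luce_extract τ hτpos hτsum hτiia
    refine ⟨fun x => ρH x univ, fun x => τ x univ, l,
      ⟨⟨hHposu, fun x => hτpos univ univ_nonempty x (mem_univ x),
        hlpos.le, hllt1.le, ?_⟩, hHluce⟩⟩
    intro S hS x hx
    rw [← hHluce S hS x hx, ← hτluce S hS x hx, hτ]
    simp only
    field_simp
    ring
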